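/- For positive integers s and L, the generating function for nonempty partitions π with smallest part s(π) ≥ s+1 and largest part satisfying l(π) - s(π) ≤ L equals (1/(1-q^L)) · (1/((1-q^{s+1})(1-q^{s+2})⋯(1-q^{L+s})) − 1) as formal power series. -/

import Mathlib

open PowerSeries

namespace Theorems100

noncomputable section

variable {α : Type*}

open Finset

open scoped Classical

/-- The partial product for the generating function for odd partitions.
TODO: As `m` tends to infinity, this converges (in the `X`-adic topology).

If `m` is sufficiently large, the `i`th coefficient gives the number of odd partitions of the
natural number `i`: proved in `oddGF_prop`.
It is stated for an arbitrary field `α`, though it usually suffices to use `ℚ` or `ℝ`.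
-/
def partialOddGF (m : ℕ) [Field α] :=
  ∏ i ∈ range m, (1 - (X : PowerSeries α) ^ (2 * i + 1))⁻¹

/-- The partial product for the generating function for distinct partitions.
TODO: As `m` tends to infinity, this converges (in the `X`-adic topology).

If `m` is sufficiently large, the `i`th coefficient gives the number of distinct partitions of the
natural number `i`: proved in `distinctGF_prop`.
It is stated for an arbitrary commutative semiring `α`, though it usually suffices to use `ℕ`, `ℚ`
or `ℝ`.
-/
def partialDistinctGF (m : ℕ) [CommSemiring α] :=
  ∏ i ∈ range m, (1 + (X : PowerSeries α) ^ (i + 1))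

open Finset.HasAntidiagonal

universe u
variable {ι : Type u}

/-- A convenience constructor for the power series whose coefficients indicate a subset. -/
def indicatorSeries (α : Type*) [Semiring α] (s : Set ℕ) : PowerSeries α :=
  PowerSeries.mk fun n => if n ∈ s then 1 else 0

theorem coeff_indicator (s : Set ℕ) [Semiring α] (n : ℕ) :
    coeff n (indicatorSeries α s) = if n ∈ s then 1 else 0 :=
  coeff_mk _ _

theorem coeff_indicator_pos (s : Set ℕ) [Semiring α] (n : ℕ) (h : n ∈ s) :
    coeff n (indicatorSeries α s) = 1 := by rw [coeff_indicator, if_pos h]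

theorem coeff_indicator_neg (s : Set ℕ) [Semiring α] (n : ℕ) (h : n ∉ s) :
    coeff n (indicatorSeries α s) = 0 := by rw [coeff_indicator, if_neg h]

theorem constantCoeff_indicator (s : Set ℕ) [Semiring α] :
    constantCoeff (indicatorSeries α s) = if 0 ∈ s then 1 else 0 :=
  rfl

theorem two_series (i : ℕ) [Semiring α] :
    1 + (X : PowerSeries α) ^ i.succ = indicatorSeries α {0, i.succ} := by
  ext n
  simp only [coeff_indicator, coeff_one, coeff_X_pow, Set.mem_insert_iff, Set.mem_singleton_iff,
    map_add]
  cases' n with d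
  · simp [(Nat.succ_ne_zero i).symm]
  · simp [Nat.succ_ne_zero d]

theorem num_series' [Field α] (i : ℕ) :
    (1 - (X : PowerSeries α) ^ (i + 1))⁻¹ = indicatorSeries α {k | i + 1 ∣ k} := by
  rw [PowerSeries.inv_eq_iff_mul_eq_one]
  · ext n
    cases n with
    | zero => simp [mul_sub, zero_pow, constantCoeff_indicator]
    | succ n =>
      simp only [coeff_one, if_false, mul_sub, mul_one, coeff_indicator,
        LinearMap.map_sub, reduceCtorEq]
      simp_rw [coeff_mul, coeff_X_pow, coeff_indicator, @boole_mul _ _ _ _]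
      simp only [Set.mem_setOf_eq]
      erw [sum_ite, sum_ite]
      simp_rw [@filter_filter _ _ _ _ _, sum_const_zero, add_zero, sum_const, nsmul_eq_mul, mul_one,
        sub_eq_iff_eq_add, zero_add]
      symm
      split_ifs with h
      · suffices #{a ∈ antidiagonal (n + 1) | i + 1 ∣ a.fst ∧ a.snd = i + 1} = 1 by
          convert congr_arg ((↑) : ℕ → α) this; norm_cast
        rw [card_eq_one]
        cases' h with p hp
        refine ⟨((i + 1) * (p - 1), i + 1), ?_⟩
        ext ⟨a₁, a₂⟩
        simp only [mem_filter, Prod.mk.injEq, HasAntidiagonal.mem_antidiagonal, mem_singleton]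
        constructor
        · rintro ⟨a_left, ⟨a, rfl⟩, rfl⟩
          refine ⟨?_, rfl⟩
          rw [Nat.mul_sub_left_distrib, ← hp, ← a_left, mul_one, Nat.add_sub_cancel]
        · rintro ⟨rfl, rfl⟩
          match p with
          | 0 => rw [mul_zero] at hp; cases hp
          | p + 1 => rw [hp]; simp [mul_add]
      · suffices #{a ∈ antidiagonal (n + 1) | i + 1 ∣ a.fst ∧ a.snd = i + 1} = 0 by
          convert congr_arg ((↑) : ℕ → α) this; norm_cast
        rw [card_eq_zero]
        apply eq_empty_of_forall_notMem
        simp only [Prod.forall, mem_filter, not_and, HasAntidiagonal.mem_antidiagonal]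
        rintro _ h₁ h₂ ⟨a, rfl⟩ rfl
        apply h
        simp [← h₂]
  · simp [zero_pow]

def mkOdd : ℕ ↪ ℕ :=
  ⟨fun i => 2 * i + 1, fun x y h => by linarith⟩

-- The main workhorse of the partition theorem proof.
theorem partialGF_prop (α : Type*) [CommSemiring α] (n : ℕ) (s : Finset ℕ) (hs : ∀ i ∈ s, 0 < i)
    (c : ℕ → Set ℕ) (hc : ∀ i, i ∉ s → 0 ∈ c i) :
    #{p : n.Partition | (∀ j, p.parts.count j ∈ c j) ∧ ∀ j ∈ p.parts, j ∈ s} =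
      coeff n (∏ i ∈ s, indicatorSeries α ((· * i) '' c i)) := by
  simp_rw [coeff_prod, coeff_indicator, prod_boole, sum_boole]
  apply congr_arg
  simp only [mem_univ, forall_true_left, not_and, not_forall, exists_prop,
    Set.mem_image, not_exists]
  set φ : (a : Nat.Partition n) →
    a ∈ filter (fun p ↦ (∀ (j : ℕ), Multiset.count j p.parts ∈ c j) ∧ ∀ j ∈ p.parts, j ∈ s) univ →
    ℕ →₀ ℕ := fun p _ => {
      toFun := fun i => Multiset.count i p.parts • i
      support := Finset.filter (fun i => i ≠ 0) p.parts.toFinset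
      mem_support_toFun := fun a => by
        simp only [smul_eq_mul, ne_eq, mul_eq_zero, Multiset.count_eq_zero]
        rw [not_or, not_not]
        simp only [Multiset.mem_toFinset, not_not, mem_filter] }
  refine Finset.card_bij φ ?_ ?_ ?_
  · intro a ha
    simp only [φ, not_forall, not_exists, not_and, exists_prop, mem_filter]
    rw [mem_finsuppAntidiag]
    dsimp only [ne_eq, smul_eq_mul, id_eq, eq_mpr_eq_cast, le_eq_subset, Finsupp.coe_mk]
    simp only [mem_univ, forall_true_left, not_and, not_forall, exists_prop,
      mem_filter, true_and] at ha
    refine ⟨⟨?_, fun i ↦ ?_⟩, fun i _ ↦ ⟨a.parts.count i, ha.1 i, rfl⟩⟩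
    · conv_rhs => simp [← a.parts_sum]
      rw [sum_multiset_count_of_subset _ s]
      · simp only [smul_eq_mul]
      · intro i
        simp only [Multiset.mem_toFinset, not_not, mem_filter]
        apply ha.2
    · simp only [ne_eq, Multiset.mem_toFinset, not_not, mem_filter, and_imp]
      exact fun hi _ ↦ ha.2 i hi
  · intro p₁ hp₁ p₂ hp₂ h
    apply Nat.Partition.ext
    simp only [true_and, mem_univ, mem_filter] at hp₁ hp₂
    ext i
    simp only [φ, ne_eq, Multiset.mem_toFinset, not_not, smul_eq_mul, Finsupp.mk.injEq] at h
    by_cases hi : i = 0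
    · rw [hi]
      rw [Multiset.count_eq_zero_of_notMem]
      · rw [Multiset.count_eq_zero_of_notMem]
        intro a; exact Nat.lt_irrefl 0 (hs 0 (hp₂.2 0 a))
      intro a; exact Nat.lt_irrefl 0 (hs 0 (hp₁.2 0 a))
    · rw [← mul_left_inj' hi]
      rw [funext_iff] at h
      exact h.2 i
  · simp only [φ, mem_filter, mem_finsuppAntidiag, mem_univ, exists_prop, true_and, and_assoc]
    rintro f ⟨hf, hf₃, hf₄⟩
    have hf' : f ∈ finsuppAntidiag s n := mem_finsuppAntidiag.mpr ⟨hf, hf₃⟩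
    simp only [mem_finsuppAntidiag] at hf'
    refine ⟨⟨∑ i ∈ s, Multiset.replicate (f i / i) i, ?_, ?_⟩, ?_, ?_, ?_⟩
    · intro i hi
      simp only [exists_prop, Multiset.mem_sum, mem_map, Function.Embedding.coeFn_mk] at hi
      rcases hi with ⟨t, ht, z⟩
      apply hs
      rwa [Multiset.eq_of_mem_replicate z]
    · simp_rw [Multiset.sum_sum, Multiset.sum_replicate, Nat.nsmul_eq_mul]
      rw [← hf'.1]
      refine sum_congr rfl fun i hi => Nat.div_mul_cancel ?_
      rcases hf₄ i hi with ⟨w, _, hw₂⟩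
      rw [← hw₂]
      exact dvd_mul_left _ _
    · intro i
      simp_rw [Multiset.count_sum', Multiset.count_replicate, sum_ite_eq']
      split_ifs with h
      · rcases hf₄ i h with ⟨w, hw₁, hw₂⟩
        rwa [← hw₂, Nat.mul_div_cancel _ (hs i h)]
      · exact hc _ h
    · intro i hi
      rw [Multiset.mem_sum] at hi
      rcases hi with ⟨j, hj₁, hj₂⟩
      rwa [Multiset.eq_of_mem_replicate hj₂]
    · ext i
      simp_rw [Multiset.count_sum', Multiset.count_replicate, sum_ite_eq']
      simp only [ne_eq, Multiset.mem_toFinset, not_not, smul_eq_mul, ite_mul,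
        zero_mul, Finsupp.coe_mk]
      split_ifs with h
      · apply Nat.div_mul_cancel
        rcases hf₄ i h with ⟨w, _, hw₂⟩
        apply Dvd.intro_left _ hw₂
      · apply symm
        rw [← Finsupp.notMem_support_iff]
        exact notMem_mono hf'.2 h


theorem countGF (n : ℕ) (S : Finset ℕ) (hS : 0 ∉ S) :
    ((Finset.univ.filter fun p : Nat.Partition n => ∀ j ∈ p.parts, j ∈ S).card : ℚ) =
      coeff n (∏ i ∈ S, (1 - (X : PowerSeries ℚ) ^ i)⁻¹) := by
  have hpos : ∀ i ∈ S, 0 < i := fun i hi => Nat.pos_of_ne_zero (fun h => hS (h ▸ hi))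
  have := partialGF_prop ℚ n S hpos (fun _ => Set.univ) (fun _ _ => trivial)
  rw [show ({p : Nat.Partition n | (∀ j, p.parts.count j ∈ (Set.univ : Set ℕ)) ∧
        ∀ j ∈ p.parts, j ∈ S} : Finset _)
      = Finset.univ.filter fun p : Nat.Partition n => ∀ j ∈ p.parts, j ∈ S by
    ext p; simp] at this
  rw [this]
  congr 1
  apply Finset.prod_congr rfl
  intro i hi
  obtain ⟨i, rfl⟩ := Nat.exists_eq_succ_of_ne_zero (hpos i hi).ne'
  rw [num_series']
  congr 1
  ext k
  simp only [coeff_indicator, Set.mem_setOf_eq, Set.mem_range]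
  congr 1
  simp only [Set.image_univ, Set.mem_range, eq_iff_iff, Nat.succ_eq_add_one]
  constructor
  · rintro ⟨a, rfl⟩; exact Dvd.intro_left a rfl
  · rintro ⟨c, rfl⟩; exact ⟨c, mul_comm _ _⟩

/-- Window product of inverses. -/
def Wf (a b : ℕ) : PowerSeries ℚ := ∏ i ∈ Finset.Ico a b, (1 - X ^ i)⁻¹

lemma const_onemX {i : ℕ} (hi : i ≠ 0) : constantCoeff (1 - (X : PowerSeries ℚ) ^ i) = 1 := by
  simp [map_sub, map_pow, constantCoeff_X, zero_pow hi]

lemma mul_inv_one {i : ℕ} (hi : i ≠ 0) :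
    (1 - (X : PowerSeries ℚ) ^ i) * (1 - (X : PowerSeries ℚ) ^ i)⁻¹ = 1 :=
  PowerSeries.mul_inv_cancel _ (by rw [const_onemX hi]; norm_num)

lemma prod_mul_W {s t : Finset ℕ} (hsub : s ⊆ t) (ht : 0 ∉ t) :
    (∏ i ∈ t, (1 - (X : PowerSeries ℚ) ^ i)) * (∏ i ∈ s, (1 - (X : PowerSeries ℚ) ^ i)⁻¹) =
      ∏ i ∈ t \ s, (1 - (X : PowerSeries ℚ) ^ i) := by
  rw [← Finset.prod_sdiff hsub, mul_assoc, ← Finset.prod_mul_distrib]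
  have h1 : ∏ i ∈ s, ((1 - (X : PowerSeries ℚ) ^ i) * (1 - (X : PowerSeries ℚ) ^ i)⁻¹) = 1 :=
    Finset.prod_eq_one fun i hi => mul_inv_one (fun h0 => ht (h0 ▸ hsub hi))
  rw [h1, mul_one]

lemma coeff_Wf (n a b : ℕ) (ha : 0 < a) :
    coeff n (Wf a b) =
      ((Finset.univ.filter fun p : Nat.Partition n =>
          ∀ j ∈ p.parts, j ∈ Finset.Ico a b).card : ℚ) := by
  rw [Wf, ← countGF]
  simp [ha.ne']

lemma constCoeff_Wf (a b : ℕ) (ha : 0 < a) : coeff 0 (Wf a b) = 1 := by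
  rw [coeff_Wf 0 a b ha]
  norm_cast

lemma coeff_Wf_small {n a b : ℕ} (ha : 0 < a) (hn : 0 < n) (hna : n < a) :
    coeff n (Wf a b) = 0 := by
  rw [coeff_Wf n a b ha]
  norm_cast
  rw [Finset.card_eq_zero, Finset.filter_eq_empty_iff]
  intro p _
  intro hall
  have hne : p.parts ≠ 0 := by
    intro h0
    have := p.parts_sum
    rw [h0] at this
    simp at this
    omega
  obtain ⟨j, hj⟩ := Multiset.exists_mem_of_ne_zero hne
  have hle : j ≤ n := by
    simpa [p.parts_sum] using Multiset.single_le_sum (fun _ _ => Nat.zero_le _) _ hj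
  have := (Finset.mem_Ico.mp (hall j hj)).1
  omega

lemma prod_onemX_ne_zero (t : Finset ℕ) (ht : 0 ∉ t) :
    (∏ i ∈ t, (1 - (X : PowerSeries ℚ) ^ i)) ≠ 0 := by
  intro h
  have : constantCoeff (∏ i ∈ t, (1 - (X : PowerSeries ℚ) ^ i)) = 1 := by
    rw [map_prod]
    exact Finset.prod_eq_one fun i hi => const_onemX (fun h0 => ht (h0 ▸ hi))
  rw [h, map_zero] at this
  norm_num at this

lemma tele (L : ℕ) (hL : 0 < L) {m : ℕ} (hm : 0 < m) :
    (1 - (X : PowerSeries ℚ) ^ L) * (Wf m (m + L + 1) - Wf (m + 1) (m + L + 1)) =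
      Wf m (m + L) - Wf (m + 1) (m + L + 1) := by
  have ht : (0 : ℕ) ∉ Finset.Ico m (m + L + 1) := by
    simp; omega
  apply mul_left_cancel₀ (prod_onemX_ne_zero _ ht)
  have h1 : (∏ i ∈ Finset.Ico m (m + L + 1), (1 - (X : PowerSeries ℚ) ^ i)) *
      Wf m (m + L + 1) = 1 := by
    rw [Wf, prod_mul_W (Finset.Subset.refl _) ht, Finset.sdiff_self, Finset.prod_empty]
  have h2 : (∏ i ∈ Finset.Ico m (m + L + 1), (1 - (X : PowerSeries ℚ) ^ i)) *
      Wf (m + 1) (m + L + 1) = 1 - X ^ m := by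
    rw [Wf, prod_mul_W (Finset.Ico_subset_Ico (by omega) le_rfl) ht]
    have : Finset.Ico m (m + L + 1) \ Finset.Ico (m + 1) (m + L + 1) = {m} := by
      ext x; simp only [Finset.mem_sdiff, Finset.mem_Ico, Finset.mem_singleton]; omega
    rw [this, Finset.prod_singleton]
  have h3 : (∏ i ∈ Finset.Ico m (m + L + 1), (1 - (X : PowerSeries ℚ) ^ i)) *
      Wf m (m + L) = 1 - X ^ (m + L) := by
    rw [Wf, prod_mul_W (Finset.Ico_subset_Ico le_rfl (by omega)) ht]
    have : Finset.Ico m (m + L + 1) \ Finset.Ico m (m + L) = {m + L} := by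
      ext x; simp only [Finset.mem_sdiff, Finset.mem_Ico, Finset.mem_singleton]; omega
    rw [this, Finset.prod_singleton]
  calc (∏ i ∈ Finset.Ico m (m + L + 1), (1 - (X : PowerSeries ℚ) ^ i)) *
        ((1 - (X : PowerSeries ℚ) ^ L) * (Wf m (m + L + 1) - Wf (m + 1) (m + L + 1)))
      = (1 - (X : PowerSeries ℚ) ^ L) *
        ((∏ i ∈ Finset.Ico m (m + L + 1), (1 - (X : PowerSeries ℚ) ^ i)) * Wf m (m + L + 1) -
         (∏ i ∈ Finset.Ico m (m + L + 1), (1 - (X : PowerSeries ℚ) ^ i)) *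
           Wf (m + 1) (m + L + 1)) := by ring
    _ = (1 - (X : PowerSeries ℚ) ^ L) * (1 - (1 - X ^ m)) := by rw [h1, h2]
    _ = (1 - X ^ (m + L)) - (1 - X ^ m) := by rw [pow_add]; ring
    _ = (∏ i ∈ Finset.Ico m (m + L + 1), (1 - (X : PowerSeries ℚ) ^ i)) *
          (Wf m (m + L) - Wf (m + 1) (m + L + 1)) := by rw [mul_sub, h3, h2]

lemma tele_sum (L s n : ℕ) (hL : 0 < L) (hsn : s + 1 ≤ n + 1) :
    (1 - (X : PowerSeries ℚ) ^ L) *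
      ∑ m ∈ Finset.Icc (s + 1) n, (Wf m (m + L + 1) - Wf (m + 1) (m + L + 1)) =
      Wf (s + 1) (s + 1 + L) - Wf (n + 1) (n + 1 + L) := by
  rw [Finset.mul_sum]
  have hterm : ∀ m ∈ Finset.Icc (s + 1) n,
      (1 - (X : PowerSeries ℚ) ^ L) * (Wf m (m + L + 1) - Wf (m + 1) (m + L + 1)) =
        Wf m (m + L) - Wf (m + 1) (m + 1 + L) := by
    intro m hm
    have hm1 : 0 < m := by simp [Finset.mem_Icc] at hm; omega
    rw [tele L hL hm1, show m + L + 1 = m + 1 + L from by omega]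
  rw [Finset.sum_congr rfl hterm]
  rw [← Finset.Ico_add_one_right_eq_Icc, Finset.sum_Ico_eq_sum_range]
  set g : ℕ → PowerSeries ℚ := fun i => Wf (s + 1 + i) (s + 1 + i + L) with hg
  have key := Finset.sum_range_sub' g (n + 1 - (s + 1))
  have hsummand : ∀ i, Wf (s + 1 + i) (s + 1 + i + L) -
      Wf (s + 1 + i + 1) (s + 1 + i + 1 + L) = g i - g (i + 1) := by
    intro i
    congr 1
  have h0 : g 0 = Wf (s + 1) (s + 1 + L) := by simp [hg]
  have h2 : g (n + 1 - (s + 1)) = Wf (n + 1) (n + 1 + L) := by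
    have e1 : s + 1 + (n + 1 - (s + 1)) = n + 1 := by omega
    simp only [hg]
    rw [e1]
  rw [Finset.sum_congr rfl fun i _ => hsummand i, key, h0, h2]

def minPart {n : ℕ} (p : Nat.Partition n) : ℕ := sInf {j | j ∈ p.parts}

lemma minPart_mem {n : ℕ} {p : Nat.Partition n} (h : p.parts ≠ 0) : minPart p ∈ p.parts := by
  obtain ⟨j, hj⟩ := Multiset.exists_mem_of_ne_zero h
  exact Nat.sInf_mem (⟨j, hj⟩ : Set.Nonempty {j | j ∈ p.parts})

lemma minPart_le {n : ℕ} {p : Nat.Partition n} {j : ℕ} (hj : j ∈ p.parts) : minPart p ≤ j :=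
  Nat.sInf_le hj

lemma part_le_sum {n : ℕ} {p : Nat.Partition n} {j : ℕ} (hj : j ∈ p.parts) : j ≤ n := by
  simpa [p.parts_sum] using Multiset.single_le_sum (fun _ _ => Nat.zero_le _) _ hj

lemma count_eq (s L n k : ℕ) (hL : 0 < L) (hk : k ≤ n) :
    ((Finset.univ.filter fun p : Nat.Partition k => p.parts ≠ 0 ∧ (∀ j ∈ p.parts, s + 1 ≤ j) ∧
        ∀ j ∈ p.parts, ∀ k' ∈ p.parts, j ≤ k' + L).card : ℚ) =
      coeff k (∑ m ∈ Finset.Icc (s + 1) n, (Wf m (m + L + 1) - Wf (m + 1) (m + L + 1))) := by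
  classical
  set C := Finset.univ.filter fun p : Nat.Partition k => p.parts ≠ 0 ∧
      (∀ j ∈ p.parts, s + 1 ≤ j) ∧ ∀ j ∈ p.parts, ∀ k' ∈ p.parts, j ≤ k' + L with hC
  have H : ∀ p ∈ C, minPart p ∈ Finset.Icc (s + 1) n := by
    intro p hp
    rw [hC, Finset.mem_filter] at hp
    obtain ⟨-, hne, hge, -⟩ := hp
    have hmem := minPart_mem hne
    rw [Finset.mem_Icc]
    exact ⟨hge _ hmem, le_trans (part_le_sum hmem) hk⟩
  rw [Finset.card_eq_sum_card_fiberwise H, map_sum]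
  push_cast
  refine Finset.sum_congr rfl ?_
  intro m hm
  rw [Finset.mem_Icc] at hm
  have hm1 : 0 < m := by omega
  set S1 := Finset.univ.filter fun p : Nat.Partition k =>
      ∀ j ∈ p.parts, j ∈ Finset.Ico m (m + L + 1) with hS1
  set S2 := Finset.univ.filter fun p : Nat.Partition k =>
      ∀ j ∈ p.parts, j ∈ Finset.Ico (m + 1) (m + L + 1) with hS2
  have hsub : S2 ⊆ S1 := by
    intro p hp
    rw [hS2, Finset.mem_filter] at hp
    rw [hS1, Finset.mem_filter]
    refine ⟨Finset.mem_univ _, fun j hj => ?_⟩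
    have := hp.2 j hj
    rw [Finset.mem_Ico] at this ⊢
    omega
  have hfib : C.filter (fun p => minPart p = m) = S1 \ S2 := by
    ext p
    simp only [hC, hS1, hS2, Finset.mem_filter, Finset.mem_sdiff, Finset.mem_univ, true_and]
    constructor
    · rintro ⟨⟨hne, hge, hpair⟩, hmin⟩
      have hmem := minPart_mem hne
      rw [hmin] at hmem
      refine ⟨fun j hj => ?_, fun hall => ?_⟩
      · rw [Finset.mem_Ico]
        have h1 : m ≤ j := hmin ▸ minPart_le hj
        have h2 : j ≤ m + L := hpair j hj m hmem
        omega
      · have := hall m hmem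
        rw [Finset.mem_Ico] at this
        omega
    · rintro ⟨hall, hnall⟩
      have hmmem : m ∈ p.parts := by
        by_contra hmn
        apply hnall
        intro j hj
        have := hall j hj
        rw [Finset.mem_Ico] at this ⊢
        rcases Nat.eq_or_lt_of_le this.1 with h | h
        · exact absurd (h ▸ hj) hmn
        · omega
      have hne : p.parts ≠ 0 := by
        intro h0; rw [h0] at hmmem; simp at hmmem
      have hminp : minPart p = m := by
        have h1 := minPart_le hmmem
        have h2 := hall _ (minPart_mem hne)
        rw [Finset.mem_Ico] at h2
        omega
      refine ⟨⟨hne, fun j hj => ?_, fun j hj k' hk' => ?_⟩, hminp⟩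
      · have := hall j hj; rw [Finset.mem_Ico] at this; omega
      · have h1 := hall j hj
        have h2 := hall k' hk'
        rw [Finset.mem_Ico] at h1 h2
        omega
  rw [hfib, Finset.card_sdiff_of_subset hsub, map_sub, coeff_Wf k m (m + L + 1) hm1,
    coeff_Wf k (m + 1) (m + L + 1) (by omega), Nat.cast_sub (Finset.card_le_card hsub)]

lemma count_small (s L k : ℕ) (hk : k ≤ s) :
    ((Finset.univ.filter fun p : Nat.Partition k => p.parts ≠ 0 ∧ (∀ j ∈ p.parts, s + 1 ≤ j) ∧
        ∀ j ∈ p.parts, ∀ k' ∈ p.parts, j ≤ k' + L).card : ℚ) = 0 := by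
  norm_cast
  rw [Finset.card_eq_zero, Finset.filter_eq_empty_iff]
  rintro p - ⟨hne, hge, -⟩
  obtain ⟨j, hj⟩ := Multiset.exists_mem_of_ne_zero hne
  have := part_le_sum hj
  have := hge j hj
  omega

end
end Theorems100

open PowerSeries Theorems100
open scoped Classical

theorem stmt_9 (s L : ℕ) (hs : 0 < s) (hL : 0 < L) :
    (PowerSeries.mk fun n =>
        (Nat.card {p : Nat.Partition n //
            p.parts ≠ 0 ∧ (∀ j ∈ p.parts, s + 1 ≤ j) ∧
              ∀ j ∈ p.parts, ∀ k ∈ p.parts, j ≤ k + L} : ℚ)) =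
      (1 - (PowerSeries.X : PowerSeries ℚ) ^ L)⁻¹ *
        ((∏ i ∈ Finset.range L, (1 - (PowerSeries.X : PowerSeries ℚ) ^ (s + 1 + i)))⁻¹ - 1) := by
  have hmk : (PowerSeries.mk fun n =>
      (Nat.card {p : Nat.Partition n //
          p.parts ≠ 0 ∧ (∀ j ∈ p.parts, s + 1 ≤ j) ∧
            ∀ j ∈ p.parts, ∀ k ∈ p.parts, j ≤ k + L} : ℚ)) =
      PowerSeries.mk fun n => ((Finset.univ.filter fun p : Nat.Partition n =>
        p.parts ≠ 0 ∧ (∀ j ∈ p.parts, s + 1 ≤ j) ∧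
          ∀ j ∈ p.parts, ∀ k' ∈ p.parts, j ≤ k' + L).card : ℚ) := by
    ext n
    rw [coeff_mk, coeff_mk]
    rw [Nat.card_eq_fintype_card, Fintype.card_subtype]
  rw [hmk]
  set F : PowerSeries ℚ := PowerSeries.mk fun n => ((Finset.univ.filter fun p : Nat.Partition n =>
        p.parts ≠ 0 ∧ (∀ j ∈ p.parts, s + 1 ≤ j) ∧
          ∀ j ∈ p.parts, ∀ k' ∈ p.parts, j ≤ k' + L).card : ℚ) with hF
  have hPconst : constantCoeff (∏ i ∈ Finset.range L,
      (1 - (PowerSeries.X : PowerSeries ℚ) ^ (s + 1 + i))) ≠ 0 := by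
    rw [map_prod, Finset.prod_eq_one fun i _ => const_onemX (by omega)]
    norm_num
  have hPinv : (∏ i ∈ Finset.range L, (1 - (PowerSeries.X : PowerSeries ℚ) ^ (s + 1 + i)))⁻¹ =
      Wf (s + 1) (s + 1 + L) := by
    rw [PowerSeries.inv_eq_iff_mul_eq_one hPconst]
    have hIco : (∏ i ∈ Finset.range L, (1 - (PowerSeries.X : PowerSeries ℚ) ^ (s + 1 + i))) =
        ∏ i ∈ Finset.Ico (s + 1) (s + 1 + L), (1 - (PowerSeries.X : PowerSeries ℚ) ^ i) := by
      rw [Finset.prod_Ico_eq_prod_range, show s + 1 + L - (s + 1) = L from by omega]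
    rw [hIco, mul_comm, Wf, prod_mul_W (Finset.Subset.refl _) (by simp),
      Finset.sdiff_self, Finset.prod_empty]
  have hunit : constantCoeff (1 - (PowerSeries.X : PowerSeries ℚ) ^ L) ≠ 0 := by
    rw [const_onemX hL.ne']; norm_num
  have hmain : (1 - (PowerSeries.X : PowerSeries ℚ) ^ L) * F = Wf (s + 1) (s + 1 + L) - 1 := by
    ext n
    have hexp : (1 - (PowerSeries.X : PowerSeries ℚ) ^ L) * F = F - F * X ^ L := by ring
    rw [hexp, map_sub, map_sub, PowerSeries.coeff_mul_X_pow', hF, coeff_mk]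
    by_cases hns : n ≤ s
    · rw [count_small s L n hns]
      have h2 : (if L ≤ n then (coeff (n - L)) (PowerSeries.mk fun n =>
          ((Finset.univ.filter fun p : Nat.Partition n =>
            p.parts ≠ 0 ∧ (∀ j ∈ p.parts, s + 1 ≤ j) ∧
              ∀ j ∈ p.parts, ∀ k' ∈ p.parts, j ≤ k' + L).card : ℚ)) else 0) = 0 := by
        split_ifs with h
        · rw [coeff_mk, count_small s L (n - L) (by omega)]
        · rfl
      rw [h2]
      rcases Nat.eq_zero_or_pos n with rfl | hn
      · rw [constCoeff_Wf _ _ (by omega), PowerSeries.coeff_one]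
        norm_num
      · rw [coeff_Wf_small (n := n) (a := s + 1) (b := s + 1 + L) (by omega) hn (by omega)]
        rw [PowerSeries.coeff_one, if_neg (show ¬(n = 0) by omega)]
    · push_neg at hns
      have ht := tele_sum L s n hL (by omega)
      have hTn := count_eq s L n n hL le_rfl
      have hcoeff := congrArg (coeff n) ht
      rw [map_sub] at hcoeff
      rw [coeff_Wf_small (n := n) (a := n + 1) (b := n + 1 + L) (by omega) (by omega)
        (by omega)] at hcoeff
      have hexp2 : (1 - (PowerSeries.X : PowerSeries ℚ) ^ L) *
          (∑ m ∈ Finset.Icc (s + 1) n, (Wf m (m + L + 1) - Wf (m + 1) (m + L + 1))) =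
          (∑ m ∈ Finset.Icc (s + 1) n, (Wf m (m + L + 1) - Wf (m + 1) (m + L + 1))) -
          (∑ m ∈ Finset.Icc (s + 1) n, (Wf m (m + L + 1) - Wf (m + 1) (m + L + 1))) * X ^ L := by
        ring
      rw [hexp2, map_sub, PowerSeries.coeff_mul_X_pow'] at hcoeff
      rw [← hTn] at hcoeff
      have h3 : (if L ≤ n then (coeff (n - L)) (∑ m ∈ Finset.Icc (s + 1) n,
          (Wf m (m + L + 1) - Wf (m + 1) (m + L + 1))) else 0) =
          (if L ≤ n then (coeff (n - L)) (PowerSeries.mk fun n =>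
            ((Finset.univ.filter fun p : Nat.Partition n =>
              p.parts ≠ 0 ∧ (∀ j ∈ p.parts, s + 1 ≤ j) ∧
                ∀ j ∈ p.parts, ∀ k' ∈ p.parts, j ≤ k' + L).card : ℚ)) else 0) := by
        split_ifs with h
        · rw [coeff_mk, count_eq s L n (n - L) hL (by omega)]
        · rfl
      rw [h3] at hcoeff
      rw [sub_eq_iff_eq_add] at hcoeff ⊢
      rw [hcoeff]
      rw [PowerSeries.coeff_one, if_neg (show ¬(n = 0) by omega)]
  rw [hPinv, ← hmain, ← mul_assoc, PowerSeries.inv_mul_cancel _ hunit, one_mul]
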